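/- Let N ≥ 1 be an integer and let ρ > N, C₀ > 0, r₀ > 0. Then there exists a constant C > 0, depending only on N, ρ, C₀ and r₀, with the following property: for every z ∈ ℝ^N, every measurable g : ℝ^N → ℝ with 0 ≤ g(x) ≤ 1 for all x and with g(x) ≥ 1 − C₀|x − z|^ρ whenever |x − z| ≤ r₀/2, every measurable h : ℝ^N → ℝ with 0 ≤ h ≤ 1 and h(x) = 1 whenever |x| ≤ r₀/2, and every ε ∈ (0,1], one has 0 ≤ ∫_{ℝ^N} (1 − g(x) h(x − z)) · ε^N / (ε² + |x − z|²)^N dx ≤ C ε^N. -/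

import Mathlib

open MeasureTheory Set
open scoped ENNReal NNReal

open Metric

lemma bubble_pow_rpow {x : ℝ} (hx : 0 ≤ x) (k : ℕ) (s : ℝ) : (x ^ k) ^ s = (x ^ s) ^ k := by
  rw [← Real.rpow_natCast x k, ← Real.rpow_mul hx, mul_comm, Real.rpow_mul hx,
    Real.rpow_natCast]

lemma bubble_integrableOn_ball (N : ℕ) (hN : 1 ≤ N) {s R : ℝ}
    (hs : -(N : ℝ) < s) (hR : 0 < R) :
    IntegrableOn (fun y : EuclideanSpace ℝ (Fin N) => ‖y‖ ^ s)
      (Metric.closedBall 0 R) volume := by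
  haveI : Nonempty (Fin N) := ⟨⟨0, hN⟩⟩
  set E := EuclideanSpace ℝ (Fin N)
  set f : E → ℝ := fun y => ‖y‖ ^ s with hf
  have fm : Measurable f := by fun_prop
  set A : ℕ → Set E := fun k => {y : E | R / 2 ^ (k + 1) < ‖y‖} ∩ closedBall 0 (R / 2 ^ k)
    with hA
  have hAmeas : ∀ k, MeasurableSet (A k) := fun k =>
    (measurableSet_lt measurable_const measurable_norm).inter measurableSet_closedBall
  have hak : ∀ k : ℕ, (0:ℝ) < R / 2 ^ k := fun k => by positivity
  -- pointwise bound on A k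
  set M : ℕ → ℝ := fun k => (R / 2 ^ (k + 1)) ^ s * 2 ^ max s 0 with hM
  have hbd : ∀ k, ∀ y ∈ A k, ‖f y‖ ≤ M k := by
    intro k y hy
    obtain ⟨h1, h2⟩ := hy
    rw [mem_closedBall, dist_zero_right] at h2
    have hy0 : (0:ℝ) < ‖y‖ := (hak (k+1)).trans h1
    rw [hf, Real.norm_of_nonneg (Real.rpow_nonneg hy0.le s)]
    rcases le_or_gt s 0 with hs0 | hs0
    · have : ‖y‖ ^ s ≤ (R / 2 ^ (k+1)) ^ s :=
        Real.rpow_le_rpow_of_nonpos (hak (k+1)) h1.le hs0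
      refine this.trans ?_
      refine le_mul_of_one_le_right (Real.rpow_nonneg (hak (k+1)).le s) ?_
      exact Real.one_le_rpow one_le_two (le_max_right _ _)
    · have h2' : ‖y‖ ≤ R / 2 ^ (k+1) * 2 := by
        rw [pow_succ]; rw [div_mul_eq_div_div] at *; linarith [h2]
      calc ‖y‖ ^ s ≤ (R / 2 ^ (k+1) * 2) ^ s :=
            Real.rpow_le_rpow hy0.le h2' hs0.le
        _ = (R / 2 ^ (k+1)) ^ s * 2 ^ s :=
            Real.mul_rpow (hak (k+1)).le (by norm_num)
        _ = M k := by rw [hM, max_eq_left hs0.le]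
  have hAfin : ∀ k, volume (A k) < ⊤ := fun k =>
    lt_of_le_of_lt (measure_mono inter_subset_right) measure_closedBall_lt_top
  have hint : ∀ k, IntegrableOn f (A k) volume := by
    intro k
    exact Measure.integrableOn_of_bounded (hAfin k).ne fm.aestronglyMeasurable
      ((ae_restrict_mem (hAmeas k)).mono (hbd k))
  -- summability
  set v : ℝ := (volume (ball (0:E) 1)).toReal with hv
  have hvol : ∀ k, (volume (A k)).toReal ≤ (R / 2 ^ k) ^ N * v := by
    intro k
    have h1 : volume (A k) ≤ volume (closedBall (0:E) (R / 2 ^ k)) :=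
      measure_mono inter_subset_right
    have h2 : volume (closedBall (0:E) (R / 2 ^ k))
        = ENNReal.ofReal ((R / 2 ^ k) ^ N) * volume (ball (0:E) 1) := by
      rw [Measure.addHaar_closedBall _ _ (hak k).le, finrank_euclideanSpace_fin]
    calc (volume (A k)).toReal ≤ (volume (closedBall (0:E) (R / 2 ^ k))).toReal :=
          ENNReal.toReal_mono measure_closedBall_lt_top.ne h1
      _ = (R / 2 ^ k) ^ N * v := by
          rw [h2, ENNReal.toReal_mul, ENNReal.toReal_ofReal (by positivity)]
  have hIb : ∀ k, (∫ y in A k, ‖f y‖) ≤ M k * ((R / 2 ^ k) ^ N * v) := by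
    intro k
    have h0 : 0 ≤ ∫ y in A k, ‖f y‖ := integral_nonneg fun y => norm_nonneg _
    have := norm_setIntegral_le_of_norm_le_const (μ := volume) (s := A k)
      (f := fun y => ‖f y‖) (hAfin k) (fun y hy => by
        rw [norm_norm]; exact hbd k y hy)
    rw [Real.norm_of_nonneg h0] at this
    refine this.trans ?_
    have hMk : 0 ≤ M k := mul_nonneg (Real.rpow_nonneg (hak (k+1)).le _)
      (Real.rpow_nonneg (by norm_num) _)
    exact mul_le_mul_of_nonneg_left (hvol k) hMk
  -- geometric bound
  set q : ℝ := (1/2 : ℝ) ^ (s + N) with hq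
  have hq0 : 0 ≤ q := Real.rpow_nonneg (by norm_num) _
  have hq1 : q < 1 := Real.rpow_lt_one (by norm_num) (by norm_num) (by linarith)
  set Cc : ℝ := R ^ s * (1/2:ℝ) ^ s * 2 ^ max s 0 * ((R ^ N : ℝ) * v) with hCc
  have hc : (0:ℝ) ≤ 1/2 := by norm_num
  have h2k : ∀ k : ℕ, R / 2 ^ k = R * (1/2:ℝ) ^ k := by
    intro k; rw [div_eq_mul_inv, ← inv_pow]; norm_num
  have hqq : q = (1/2:ℝ) ^ s * ((1/2:ℝ) ^ N : ℝ) := by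
    rw [hq, Real.rpow_add (by norm_num), Real.rpow_natCast]
  have hbk : ∀ k : ℕ, M k * ((R / 2 ^ k) ^ N * v) = Cc * q ^ k := by
    intro k
    have e1 : (R / 2 ^ (k+1)) ^ s = R ^ s * ((1/2:ℝ) ^ s) ^ (k+1) := by
      rw [h2k (k+1), Real.mul_rpow hR.le (pow_nonneg hc _), bubble_pow_rpow hc]
    have e2 : (R / 2 ^ k) ^ N = (R ^ N : ℝ) * (((1/2:ℝ)) ^ N) ^ k := by
      rw [h2k k, mul_pow, pow_right_comm]
    simp only [hM, hCc]
    rw [e1, e2, hqq, mul_pow]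
    ring
  have hsum : Summable fun k : ℕ => ∫ y in A k, ‖f y‖ := by
    refine Summable.of_nonneg_of_le (fun k => integral_nonneg fun y => norm_nonneg _)
      (fun k => (hIb k).trans_eq (hbk k)) ?_
    exact (summable_geometric_of_lt_one hq0 hq1).mul_left Cc
  have hU : IntegrableOn f (⋃ k, A k) volume :=
    integrableOn_iUnion_of_summable_integral_norm hint hsum
  have h0 : IntegrableOn f ({(0 : E)}) volume := by
    have : volume ({(0:E)} : Set E) = 0 := measure_singleton 0
    rw [IntegrableOn, Measure.restrict_eq_zero.mpr this]
    exact integrable_zero_measure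
  have hcov : closedBall (0:E) R ⊆ {(0:E)} ∪ ⋃ k, A k := by
    intro y hy
    rw [mem_closedBall, dist_zero_right] at hy
    rcases eq_or_ne y 0 with rfl | hy0
    · exact Or.inl rfl
    · have ht : (0:ℝ) < ‖y‖ := norm_pos_iff.mpr hy0
      have hex : ∃ k : ℕ, R / 2 ^ (k+1) < ‖y‖ := by
        obtain ⟨k, hk⟩ := pow_unbounded_of_one_lt (R / ‖y‖) (y := (2:ℝ)) one_lt_two
        refine ⟨k, ?_⟩
        rw [div_lt_iff₀ ht] at hk
        rw [div_lt_iff₀ (by positivity : (0:ℝ) < 2 ^ (k+1))]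
        have h2 : (2:ℝ) ^ k ≤ 2 ^ (k+1) := by
          apply pow_le_pow_right₀ one_le_two (Nat.le_succ k)
        nlinarith
      refine Or.inr (mem_iUnion.mpr ⟨Nat.find hex, Nat.find_spec hex, ?_⟩)
      rw [mem_closedBall, dist_zero_right]
      rcases Nat.eq_zero_or_pos (Nat.find hex) with h | h
      · rw [h]; simpa using hy
      · obtain ⟨m, hm⟩ : ∃ m, Nat.find hex = m + 1 := ⟨_, (Nat.succ_pred_eq_of_pos h).symm⟩
        have hlt : m < Nat.find hex := by omega
        have := Nat.find_min hex hlt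
        push_neg at this
        rw [hm]
        exact this
  exact (h0.union hU).mono_set hcov

lemma bubble_K_integrable (N : ℕ) (hN : 1 ≤ N) {ρ C₀ R : ℝ}
    (hρ : (N : ℝ) < ρ) (hC₀ : 0 < C₀) (hR : 0 < R) :
    Integrable (fun y : EuclideanSpace ℝ (Fin N) =>
      if ‖y‖ ≤ R then C₀ * ‖y‖ ^ (ρ - 2 * N) else ‖y‖ ^ (-(2 * (N:ℝ)))) volume := by
  haveI : Nonempty (Fin N) := ⟨⟨0, hN⟩⟩
  set E := EuclideanSpace ℝ (Fin N)
  set K : E → ℝ := fun y =>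
    if ‖y‖ ≤ R then C₀ * ‖y‖ ^ (ρ - 2 * N) else ‖y‖ ^ (-(2 * (N:ℝ))) with hK
  have hKmeas : Measurable K := by
    apply Measurable.ite (measurableSet_le measurable_norm measurable_const)
    · fun_prop
    · fun_prop
  have hNcast : (0:ℝ) < N := by exact_mod_cast hN
  -- inner part
  have hs' : -(N:ℝ) < ρ - 2 * N := by linarith
  have hinner : IntegrableOn K (Metric.closedBall 0 R) volume := by
    have hbase := (bubble_integrableOn_ball N hN hs' hR).const_mul C₀
    refine IntegrableOn.congr_fun hbase (fun y hy => ?_) measurableSet_closedBall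
    rw [Metric.mem_closedBall, dist_zero_right] at hy
    simp [hK, hy]
  -- outer part
  have houter : IntegrableOn K (Metric.closedBall (0:E) R)ᶜ volume := by
    set c1 : ℝ := (1 + 1/R) ^ (2 * (N:ℝ)) with hc1
    have hc1pos : 0 < c1 := Real.rpow_pos_of_pos (by positivity) _
    have hgint : Integrable (fun y : E => c1 * (1 + ‖y‖) ^ (-(2 * (N:ℝ)))) volume := by
      refine (integrable_one_add_norm ?_).const_mul c1
      rw [finrank_euclideanSpace_fin]
      linarith
    refine Integrable.mono' hgint.integrableOn hKmeas.aestronglyMeasurable.restrict ?_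
    filter_upwards [ae_restrict_mem measurableSet_closedBall.compl] with y hy
    rw [Set.mem_compl_iff, Metric.mem_closedBall, dist_zero_right, not_le] at hy
    have hy0 : (0:ℝ) < ‖y‖ := hR.trans hy
    have hKy : K y = ‖y‖ ^ (-(2 * (N:ℝ))) := by simp [hK, not_le.mpr hy]
    rw [hKy, Real.norm_of_nonneg (Real.rpow_nonneg hy0.le _)]
    have hA : (0:ℝ) < ‖y‖ ^ (2 * (N:ℝ)) := Real.rpow_pos_of_pos hy0 _
    have hB : (0:ℝ) < (1 + ‖y‖) ^ (2 * (N:ℝ)) := Real.rpow_pos_of_pos (by positivity) _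
    have key : (1 + ‖y‖) ^ (2 * (N:ℝ)) ≤ c1 * ‖y‖ ^ (2 * (N:ℝ)) := by
      have h1 : 1 + ‖y‖ ≤ (1 + 1/R) * ‖y‖ := by
        have hinv : 1 ≤ 1/R * ‖y‖ := by
          rw [one_div, inv_mul_eq_div, le_div_iff₀ hR]; linarith
        nlinarith
      calc (1 + ‖y‖) ^ (2 * (N:ℝ)) ≤ ((1 + 1/R) * ‖y‖) ^ (2 * (N:ℝ)) :=
            Real.rpow_le_rpow (by positivity) h1 (by positivity)
        _ = c1 * ‖y‖ ^ (2 * (N:ℝ)) := Real.mul_rpow (by positivity) hy0.le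
    rw [Real.rpow_neg hy0.le, Real.rpow_neg (by positivity : (0:ℝ) ≤ 1 + ‖y‖),
      inv_eq_one_div, inv_eq_one_div, mul_one_div, div_le_div_iff₀ hA hB]
    nlinarith
  have := hinner.union houter
  rwa [Set.union_compl_self, integrableOn_univ] at this


/-- Lemma 3.2 of the paper: if `ρ > N`, `g ≤ 1` with `g(x) ≥ 1 - C₀|x-z|^ρ` near `z`, and `h`
is a cutoff equal to `1` on the ball of radius `r₀/2`, then
`0 ≤ ∫ (1 - g(x) h(x-z)) ε^N/(ε² + |x-z|²)^N dx ≤ C ε^N` uniformly in `z` and `ε ∈ (0,1]`. -/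
theorem bubble_energy_estimate (N : ℕ) (hN : 1 ≤ N) (ρ C₀ r₀ : ℝ)
    (hρ : (N : ℝ) < ρ) (hC₀ : 0 < C₀) (hr₀ : 0 < r₀) :
    ∃ C : ℝ, 0 < C ∧
      ∀ (z : EuclideanSpace ℝ (Fin N)) (g h : EuclideanSpace ℝ (Fin N) → ℝ),
        Measurable g → (∀ x, 0 ≤ g x ∧ g x ≤ 1) →
        (∀ x, ‖x - z‖ ≤ r₀ / 2 → 1 - C₀ * ‖x - z‖ ^ ρ ≤ g x) →
        Measurable h → (∀ x, 0 ≤ h x ∧ h x ≤ 1) →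
        (∀ x, ‖x‖ ≤ r₀ / 2 → h x = 1) →
        ∀ ε : ℝ, 0 < ε → ε ≤ 1 →
          0 ≤ (∫ x, (1 - g x * h (x - z)) * ε ^ N / (ε ^ 2 + ‖x - z‖ ^ 2) ^ N) ∧
          (∫ x, (1 - g x * h (x - z)) * ε ^ N / (ε ^ 2 + ‖x - z‖ ^ 2) ^ N) ≤ C * ε ^ N := by

  haveI : Nonempty (Fin N) := ⟨⟨0, hN⟩⟩
  set E := EuclideanSpace ℝ (Fin N)
  set R : ℝ := r₀ / 2 with hRdef
  have hR : 0 < R := by positivity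
  set K : E → ℝ := fun y =>
    if ‖y‖ ≤ R then C₀ * ‖y‖ ^ (ρ - 2 * N) else ‖y‖ ^ (-(2 * (N:ℝ))) with hK
  have hKint : Integrable K volume := bubble_K_integrable N hN hρ hC₀ hR
  have hKnonneg : ∀ y, 0 ≤ K y := by
    intro y
    rw [hK]
    dsimp only
    split_ifs
    · exact mul_nonneg hC₀.le (Real.rpow_nonneg (norm_nonneg _) _)
    · exact Real.rpow_nonneg (norm_nonneg _) _
  have hI0 : 0 ≤ ∫ y, K y := integral_nonneg hKnonneg
  refine ⟨(∫ y, K y) + 1, by linarith, ?_⟩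
  intro z g h hg hg01 hglb hh hh01 hcut ε hε hε1
  have hnum : ∀ x : E, 0 ≤ 1 - g x * h (x - z) := by
    intro x
    nlinarith [(hg01 x).1, (hg01 x).2, (hh01 (x - z)).1, (hh01 (x - z)).2]
  have hfnonneg : ∀ x : E,
      0 ≤ (1 - g x * h (x - z)) * ε ^ N / (ε ^ 2 + ‖x - z‖ ^ 2) ^ N := by
    intro x
    apply div_nonneg (mul_nonneg (hnum x) (by positivity)) (by positivity)
  refine ⟨integral_nonneg hfnonneg, ?_⟩
  -- pointwise a.e. bound
  have key : ∀ᵐ x : E, (1 - g x * h (x - z)) * ε ^ N / (ε ^ 2 + ‖x - z‖ ^ 2) ^ N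
      ≤ ε ^ N * K (x - z) := by
    filter_upwards [compl_mem_ae_iff.mpr (measure_singleton z)] with x hx
    have hxz : x ≠ z := by simpa [Set.mem_compl_iff] using hx
    have ht : (0:ℝ) < ‖x - z‖ := norm_sub_pos_iff.mpr hxz
    set t : ℝ := ‖x - z‖ with htdef
    have hden : (0:ℝ) < (t ^ 2) ^ N := by positivity
    have hdenle : (t ^ 2) ^ N ≤ (ε ^ 2 + t ^ 2) ^ N :=
      pow_le_pow_left₀ (by positivity) (by nlinarith) N
    have step1 : (1 - g x * h (x - z)) * ε ^ N / (ε ^ 2 + t ^ 2) ^ N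
        ≤ (1 - g x * h (x - z)) * ε ^ N / (t ^ 2) ^ N := by
      apply div_le_div_of_nonneg_left (mul_nonneg (hnum x) (by positivity)) hden hdenle
    refine step1.trans ?_
    have hpm : (t ^ 2) ^ N = t ^ ((2 * N : ℕ) : ℝ) := by
      rw [← pow_mul, Real.rpow_natCast]
    rcases le_or_gt t R with hts | hts
    · -- inside
      have hcut1 : h (x - z) = 1 := hcut _ hts
      have hglb1 : 1 - C₀ * t ^ ρ ≤ g x := hglb x hts
      have hKxz : K (x - z) = C₀ * t ^ (ρ - 2 * N) := by
        rw [hK]; dsimp only; rw [if_pos hts]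
      have hnum2 : 1 - g x * h (x - z) ≤ C₀ * t ^ ρ := by
        rw [hcut1, mul_one]; linarith
      have step2 : (1 - g x * h (x - z)) * ε ^ N / (t ^ 2) ^ N
          ≤ C₀ * t ^ ρ * ε ^ N / (t ^ 2) ^ N := by
        gcongr
      have e1 : C₀ * t ^ ρ * ε ^ N / (t ^ 2) ^ N = ε ^ N * (C₀ * t ^ (ρ - 2 * (N:ℝ))) := by
        have hne : t ^ ((2*N : ℕ):ℝ) ≠ 0 := ne_of_gt (Real.rpow_pos_of_pos ht _)
        rw [hpm, show ρ - 2*(N:ℝ) = ρ - ((2*N : ℕ):ℝ) by push_cast; ring,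
          Real.rpow_sub ht]
        field_simp
      rw [hKxz]
      exact step2.trans (le_of_eq e1)
    · -- outside
      have hKxz : K (x - z) = t ^ (-(2 * (N:ℝ))) := by
        rw [hK]; dsimp only; rw [if_neg (not_le.mpr hts)]
      have hnum2 : 1 - g x * h (x - z) ≤ 1 := by
        nlinarith [(hg01 x).1, (hh01 (x - z)).1]
      have step2 : (1 - g x * h (x - z)) * ε ^ N / (t ^ 2) ^ N
          ≤ 1 * ε ^ N / (t ^ 2) ^ N := by
        gcongr
      have e2 : 1 * ε ^ N / (t ^ 2) ^ N = ε ^ N * t ^ (-(2 * (N:ℝ))) := by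
        rw [hpm, show -(2*(N:ℝ)) = -((2*N : ℕ):ℝ) by push_cast; ring,
          Real.rpow_neg ht.le, one_mul, div_eq_mul_inv]
      rw [hKxz]
      exact step2.trans (le_of_eq e2)
  have hupper := integral_mono_of_nonneg (Filter.Eventually.of_forall hfnonneg)
    ((hKint.comp_sub_right z).const_mul (ε ^ N)) key
  have heq : (∫ x : E, ε ^ N * K (x - z)) = ε ^ N * ∫ y, K y := by
    rw [integral_const_mul, integral_sub_right_eq_self K z]
  rw [heq] at hupper
  refine hupper.trans ?_
  have hεN : 0 < ε ^ N := pow_pos hε N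
  nlinarith
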